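/- Let f : I → R be convex and Lipschitz on an interval I, with second-derivative measure ν as in the Carr–Madan representation, and let \hat{X} be a cell-wise stationary Voronoi quantization of X on ordered grid x_1 < ⋯ < x_N with cells C_i = (x_{i−1/2}, x_{i+1/2}]. Then 0 ≤ E[f(X)] − E[f(\hat{X})] ≤ Σ_{i=1}^N E[|x_i − X| 1_{X ∈ C_i}] ν(C_i). -/

import Mathlib

open MeasureTheory

lemma piece_le {x₀ ξ : ℝ} (ν : Measure ℝ) [IsFiniteMeasure ν] {S T : Set ℝ}
    (hS : MeasurableSet S) (hT : MeasurableSet T) {h : ℝ → ℝ} (hcont : Continuous h)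
    (hpt : ∀ u ∈ T, h u ≤ S.indicator (fun _ => |x₀ - ξ|) u)
    (hnn : ∀ u, 0 ≤ h u) :
    (∫ u in T, h u ∂ν) ≤ |x₀ - ξ| * (ν (S ∩ T)).toReal := by
  set g : ℝ → ℝ := S.indicator (fun _ => |x₀ - ξ|) with hg
  have hgint : IntegrableOn g T ν :=
    ((integrable_const _).indicator hS).integrableOn
  have hae : ∀ᵐ u ∂ν.restrict T, u ∈ T := ae_restrict_mem hT
  have hhint : IntegrableOn h T ν := by
    refine Integrable.mono hgint hcont.aestronglyMeasurable.restrict ?_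
    filter_upwards [hae] with u hu
    rw [Real.norm_eq_abs, Real.norm_eq_abs, abs_of_nonneg (hnn u),
      abs_of_nonneg (Set.indicator_nonneg (fun _ _ => abs_nonneg _) u)]
    exact hpt u hu
  have hle : (∫ u in T, h u ∂ν) ≤ ∫ u in T, g u ∂ν := by
    refine integral_mono_ae hhint hgint ?_
    filter_upwards [hae] with u hu using hpt u hu
  refine le_trans hle (le_of_eq ?_)
  rw [hg, integral_indicator hS, setIntegral_const, measureReal_def, Measure.restrict_apply hS]
  simp [mul_comm]

lemma remainder_le {a b x₀ ξ : ℝ} (ν : Measure ℝ) [IsFiniteMeasure ν]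
    (hx : x₀ ∈ Set.Ioc a b) (hξ : ξ ∈ Set.Ioc a b) :
    (∫ u in Set.Iic x₀, max (u - ξ) 0 ∂ν) + (∫ u in Set.Ioi x₀, max (ξ - u) 0 ∂ν)
      ≤ |x₀ - ξ| * (ν (Set.Ioc a b)).toReal := by
  have h1 : (∫ u in Set.Iic x₀, max (u - ξ) 0 ∂ν)
      ≤ |x₀ - ξ| * (ν (Set.Ioc a b ∩ Set.Iic x₀)).toReal := by
    refine piece_le ν measurableSet_Ioc measurableSet_Iic
      (by continuity) ?_ (fun u => le_max_right _ _)
    intro u hu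
    simp only [Set.mem_Iic] at hu
    rcases le_or_gt u ξ with h | h
    · rw [max_eq_right (by linarith)]
      exact Set.indicator_nonneg (fun _ _ => abs_nonneg _) u
    · have hmem : u ∈ Set.Ioc a b := ⟨lt_trans hξ.1 h, le_trans hu hx.2⟩
      rw [Set.indicator_of_mem hmem]
      exact max_le (le_trans (by linarith : u - ξ ≤ x₀ - ξ) (le_abs_self _)) (abs_nonneg _)
  have h2 : (∫ u in Set.Ioi x₀, max (ξ - u) 0 ∂ν)
      ≤ |x₀ - ξ| * (ν (Set.Ioc a b ∩ Set.Ioi x₀)).toReal := by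
    refine piece_le ν measurableSet_Ioc measurableSet_Ioi
      (by continuity) ?_ (fun u => le_max_right _ _)
    intro u hu
    simp only [Set.mem_Ioi] at hu
    rcases le_or_gt ξ u with h | h
    · rw [max_eq_right (by linarith)]
      exact Set.indicator_nonneg (fun _ _ => abs_nonneg _) u
    · have hmem : u ∈ Set.Ioc a b := ⟨lt_trans hx.1 hu, le_trans h.le hξ.2⟩
      rw [Set.indicator_of_mem hmem]
      refine max_le (le_trans (by linarith : ξ - u ≤ ξ - x₀) ?_) (abs_nonneg _)
      rw [abs_sub_comm]; exact le_abs_self _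
  have hsum : (ν (Set.Ioc a b ∩ Set.Iic x₀)).toReal
      + (ν (Set.Ioc a b ∩ Set.Ioi x₀)).toReal = (ν (Set.Ioc a b)).toReal := by
    rw [← ENNReal.toReal_add (measure_ne_top ν _) (measure_ne_top ν _)]
    congr 1
    have := measure_inter_add_diff (μ := ν) (Set.Ioc a b) (measurableSet_Iic (a := x₀))
    rwa [Set.diff_eq, Set.compl_Iic] at this
  calc _ ≤ |x₀ - ξ| * (ν (Set.Ioc a b ∩ Set.Iic x₀)).toReal
        + |x₀ - ξ| * (ν (Set.Ioc a b ∩ Set.Ioi x₀)).toReal := add_le_add h1 h2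
    _ = |x₀ - ξ| * (ν (Set.Ioc a b)).toReal := by rw [← mul_add, hsum]

/-- for a convex Lipschitz function `f` with Carr–Madan representation with
second-derivative measure `ν` (`ν((x,y]) = f'₊(y) − f'₊(x)`, `d` playing the role of
`f'₊`), and a cell-wise stationary Voronoi quantization on the ordered grid `x i` with
interval cells `C i = (c i, c (i+1)]`,
`0 ≤ E[f(X)] − E[f(X̂)] ≤ ∑_i E[|x_i − X| 1_{X ∈ C_i}] ν(C_i)`. -/
theorem stmt17 (μ : Measure ℝ) [IsProbabilityMeasure μ] {n : ℕ}
    (c : Fin (n + 1) → ℝ) (hc : Monotone c) (x : Fin n → ℝ)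
    (hx : ∀ i : Fin n, x i ∈ Set.Ioc (c i.castSucc) (c i.succ))
    (hxmono : StrictMono x)
    (hsupp : μ (Set.Ioc (c 0) (c (Fin.last n))) = 1)
    (hstat : ∀ i : Fin n, ∫ ξ in Set.Ioc (c i.castSucc) (c i.succ), (ξ - x i) ∂μ = 0)
    (f : ℝ → ℝ) (hconv : ConvexOn ℝ Set.univ f)
    (L : ℝ) (hlip : ∀ u v, |f u - f v| ≤ L * |u - v|)
    (d : ℝ → ℝ) (ν : Measure ℝ) [IsFiniteMeasure ν]
    (hν : ∀ u v : ℝ, u ≤ v → ν (Set.Ioc u v) = ENNReal.ofReal (d v - d u))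
    (hrep : ∀ cp ξ : ℝ, f ξ = f cp + (ξ - cp) * d cp
        + (∫ u in Set.Iic cp, max (u - ξ) 0 ∂ν) + ∫ u in Set.Ioi cp, max (ξ - u) 0 ∂ν)
    (hintf : Integrable f μ) (hintid : Integrable (fun ξ : ℝ => ξ) μ) :
    0 ≤ (∫ ξ, f ξ ∂μ) -
        ∑ i : Fin n, f (x i) * (μ (Set.Ioc (c i.castSucc) (c i.succ))).toReal ∧
      (∫ ξ, f ξ ∂μ) -
          ∑ i : Fin n, f (x i) * (μ (Set.Ioc (c i.castSucc) (c i.succ))).toReal ≤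
        ∑ i : Fin n, (∫ ξ in Set.Ioc (c i.castSucc) (c i.succ), |x i - ξ| ∂μ) *
          (ν (Set.Ioc (c i.castSucc) (c i.succ))).toReal := by
  have hCmeas : ∀ i : Fin n, MeasurableSet (Set.Ioc (c i.castSucc) (c i.succ)) :=
    fun i => measurableSet_Ioc
  -- cells are pairwise disjoint
  have hdisj : Pairwise (Function.onFun Disjoint fun i : Fin n => Set.Ioc (c i.castSucc) (c i.succ)) := by
    intro i j hij
    rcases hij.lt_or_gt with h | h
    · have hle : i.succ ≤ j.castSucc := by
        simp only [Fin.le_def, Fin.lt_def] at h ⊢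
        simpa using h
      exact Set.Ioc_disjoint_Ioc.mpr
        (le_trans (min_le_left _ _) (le_trans (hc hle) (le_max_right _ _)))
    · have hle : j.succ ≤ i.castSucc := by
        simp only [Fin.le_def, Fin.lt_def] at h ⊢
        simpa using h
      exact Set.Ioc_disjoint_Ioc.mpr
        (le_trans (min_le_right _ _) (le_trans (hc hle) (le_max_left _ _)))
  -- the cells cover the support interval
  have hunion : (⋃ i : Fin n, Set.Ioc (c i.castSucc) (c i.succ))
      = Set.Ioc (c 0) (c (Fin.last n)) := by
    ext ξ
    simp only [Set.mem_iUnion, Set.mem_Ioc]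
    constructor
    · rintro ⟨i, hi1, hi2⟩
      exact ⟨lt_of_le_of_lt (hc (Fin.zero_le _)) hi1, le_trans hi2 (hc (Fin.le_last _))⟩
    · rintro ⟨h1, h2⟩
      classical
      set T := Finset.univ.filter (fun j : Fin (n+1) => c j < ξ) with hT
      have hTne : T.Nonempty := ⟨0, by simp [hT, h1]⟩
      set j₀ := T.max' hTne with hj₀
      have hj₀lt : c j₀ < ξ := by
        have := T.max'_mem hTne
        simpa [hT] using this
      have hne : j₀ ≠ Fin.last n := by
        intro h; rw [h] at hj₀lt; exact absurd h2 (not_le.mpr hj₀lt)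
      refine ⟨j₀.castPred hne, ?_, ?_⟩
      · rw [Fin.castSucc_castPred]; exact hj₀lt
      · by_contra hcon
        push_neg at hcon
        have hmem : (j₀.castPred hne).succ ∈ T := by simp [hT, hcon]
        have hle := T.le_max' _ hmem
        have hlt : j₀ < (j₀.castPred hne).succ := by
          conv_lhs => rw [← Fin.castSucc_castPred j₀ hne]
          exact Fin.castSucc_lt_succ
        exact absurd hle (not_le.mpr hlt)
  -- μ lives on the union of the cells
  have hrestr : μ.restrict (⋃ i : Fin n, Set.Ioc (c i.castSucc) (c i.succ)) = μ := by
    refine Measure.restrict_eq_self_of_ae_mem ?_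
    rw [ae_iff]
    have hcompl : μ (Set.Ioc (c 0) (c (Fin.last n)))ᶜ = 0 := by
      rw [measure_compl measurableSet_Ioc (measure_ne_top μ _), hsupp, measure_univ,
        tsub_self]
    have : {a : ℝ | ¬ a ∈ ⋃ i : Fin n, Set.Ioc (c i.castSucc) (c i.succ)}
        = (Set.Ioc (c 0) (c (Fin.last n)))ᶜ := by
      rw [← hunion]; rfl
    rw [this, hcompl]
  -- split the integral over the cells
  have hsplit : ∫ ξ, f ξ ∂μ
      = ∑ i : Fin n, ∫ ξ in Set.Ioc (c i.castSucc) (c i.succ), f ξ ∂μ := by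
    conv_lhs => rw [← hrestr]
    rw [integral_iUnion hCmeas hdisj hintf.integrableOn, tsum_fintype]
  -- per-cell bounds
  have key : ∀ i : Fin n,
      f (x i) * (μ (Set.Ioc (c i.castSucc) (c i.succ))).toReal
        ≤ (∫ ξ in Set.Ioc (c i.castSucc) (c i.succ), f ξ ∂μ) ∧
      (∫ ξ in Set.Ioc (c i.castSucc) (c i.succ), f ξ ∂μ)
        ≤ f (x i) * (μ (Set.Ioc (c i.castSucc) (c i.succ))).toReal
          + (∫ ξ in Set.Ioc (c i.castSucc) (c i.succ), |x i - ξ| ∂μ) *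
            (ν (Set.Ioc (c i.castSucc) (c i.succ))).toReal := by
    intro i
    set Ci := Set.Ioc (c i.castSucc) (c i.succ) with hCi
    set R : ℝ → ℝ := fun ξ => f ξ - f (x i) - (ξ - x i) * d (x i) with hRdef
    have hR : ∀ ξ, R ξ = (∫ u in Set.Iic (x i), max (u - ξ) 0 ∂ν)
        + ∫ u in Set.Ioi (x i), max (ξ - u) 0 ∂ν := by
      intro ξ
      have := hrep (x i) ξ
      simp only [hRdef]
      linarith
    have hRint : Integrable R μ := by
      refine Integrable.sub (hintf.sub (integrable_const _)) ?_
      exact ((hintid.sub (integrable_const _)).mul_const _)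
    have hconstint : IntegrableOn (fun _ : ℝ => f (x i)) Ci μ :=
      (integrable_const _).integrableOn
    have hlinint : IntegrableOn (fun ξ : ℝ => (ξ - x i) * d (x i)) Ci μ :=
      ((hintid.sub (integrable_const _)).mul_const _).integrableOn
    have heq : ∫ ξ in Ci, R ξ ∂μ
        = (∫ ξ in Ci, f ξ ∂μ) - f (x i) * (μ Ci).toReal := by
      have hsub : IntegrableOn (fun ξ : ℝ => f ξ - f (x i)) Ci μ :=
        hintf.integrableOn.sub hconstint
      have e0 : ∫ ξ in Ci, R ξ ∂μ
          = (∫ ξ in Ci, (f ξ - f (x i)) ∂μ) - ∫ ξ in Ci, (ξ - x i) * d (x i) ∂μ :=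
        integral_sub hsub hlinint
      have e1 : ∫ ξ in Ci, (f ξ - f (x i)) ∂μ
          = (∫ ξ in Ci, f ξ ∂μ) - f (x i) * (μ Ci).toReal := by
        rw [integral_sub hintf.integrableOn hconstint, setIntegral_const]
        ring_nf
        rw [measureReal_def]
      have e2 : ∫ ξ in Ci, (ξ - x i) * d (x i) ∂μ = 0 := by
        rw [integral_mul_const, hstat i, zero_mul]
      rw [e0, e1, e2, sub_zero]
    have hRnn : ∀ ξ, 0 ≤ R ξ := by
      intro ξ
      rw [hR ξ]
      exact add_nonneg (integral_nonneg fun u => le_max_right _ _)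
        (integral_nonneg fun u => le_max_right _ _)
    have hlow : 0 ≤ ∫ ξ in Ci, R ξ ∂μ := integral_nonneg hRnn
    have habsint : IntegrableOn (fun ξ : ℝ => |x i - ξ| * (ν Ci).toReal) Ci μ :=
      ((((integrable_const (x i)).sub hintid).abs).mul_const _).integrableOn
    have hup : ∫ ξ in Ci, R ξ ∂μ
        ≤ (∫ ξ in Ci, |x i - ξ| ∂μ) * (ν Ci).toReal := by
      have hmono : ∫ ξ in Ci, R ξ ∂μ
          ≤ ∫ ξ in Ci, |x i - ξ| * (ν Ci).toReal ∂μ := by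
        refine setIntegral_mono_on hRint.integrableOn habsint (hCmeas i) ?_
        intro ξ hξ
        rw [hR ξ]
        exact remainder_le ν (hx i) hξ
      rw [integral_mul_const] at hmono
      exact hmono
    constructor
    · linarith [heq ▸ hlow]
    · linarith [heq ▸ hup]
  constructor
  · rw [hsplit, sub_nonneg]
    exact Finset.sum_le_sum fun i _ => (key i).1
  · rw [hsplit, sub_le_iff_le_add]
    calc ∑ i : Fin n, ∫ ξ in Set.Ioc (c i.castSucc) (c i.succ), f ξ ∂μ
        ≤ ∑ i : Fin n, (f (x i) * (μ (Set.Ioc (c i.castSucc) (c i.succ))).toReal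
          + (∫ ξ in Set.Ioc (c i.castSucc) (c i.succ), |x i - ξ| ∂μ) *
            (ν (Set.Ioc (c i.castSucc) (c i.succ))).toReal) :=
          Finset.sum_le_sum fun i _ => (key i).2
      _ = _ := by rw [Finset.sum_add_distrib]; ring
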